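/- Let n ≤ m be positive integers, let u = (1,…,n) as a column vector, S the cyclic shift operator on ℤ^n, and A the n×m matrix whose columns are u, Su, …, S^{m-1}u, i.e., A(i,l) = ((i - l) mod n) + 1 for i ∈ Fin n, l ∈ Fin m. Then the n rows of A, viewed as points in ℤ^m, have pairwise distinct difference vectors, and no difference vector between distinct rows has any coordinate equal to 0. -/
import Mathlib

/-- Row `i` of the Toeplitz array `A(i,l) = ((i - l) mod n) + 1`, as a vector in `ℤ^m`. -/
def toeplitzRow (n m : ℕ) (i : Fin n) : Fin m → ℤ :=
  fun l => (((i : ℕ) : ℤ) - ((l : ℕ) : ℤ)) % (n : ℤ) + 1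

private lemma mod_diff {N x y : ℤ} (_hN : 0 < N) (hx : 0 ≤ x) (hx' : x < N)
    (hy : 0 ≤ y) (hy' : y < N) : (x - y) % N = x - y ∨ (x - y) % N = x - y + N := by
  by_cases hle : y ≤ x
  · left; exact Int.emod_eq_of_lt (by omega) (by omega)
  · right
    have h1 : (x - y) % N = (x - y + N) % N := by
      conv_rhs => rw [Int.add_emod, Int.emod_self, add_zero, Int.emod_emod_of_dvd _ dvd_rfl]
    rw [h1]
    exact Int.emod_eq_of_lt (by omega) (by omega)

/-- Toeplitz–Costas hypercubes: for `n ≤ m`, the rows of the Toeplitz array have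
pairwise distinct difference vectors, none of which has a zero coordinate. -/
theorem toeplitz_costas_hypercube (n m : ℕ) (hn : 0 < n) (hnm : n ≤ m) :
    (∀ i j i' j' : Fin n, i ≠ j → i' ≠ j' →
        toeplitzRow n m i - toeplitzRow n m j =
          toeplitzRow n m i' - toeplitzRow n m j' →
        i = i' ∧ j = j') ∧
    (∀ i j : Fin n, i ≠ j → ∀ l : Fin m,
        toeplitzRow n m i l ≠ toeplitzRow n m j l) := by
  have hN : (0 : ℤ) < (n : ℤ) := by exact_mod_cast hn
  have bnd : ∀ x : Fin n, 0 ≤ ((x : ℕ) : ℤ) ∧ ((x : ℕ) : ℤ) < (n : ℤ) :=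
    fun x => ⟨Int.natCast_nonneg _, by exact_mod_cast x.isLt⟩
  constructor
  · intro i j i' j' hij hij' h
    have hIJ : ((i : ℕ) : ℤ) ≠ ((j : ℕ) : ℤ) :=
      fun hc => hij (Fin.ext (by exact_mod_cast hc))
    have hIJ' : ((i' : ℕ) : ℤ) ≠ ((j' : ℕ) : ℤ) :=
      fun hc => hij' (Fin.ext (by exact_mod_cast hc))
    have hl : ∀ l : Fin m,
        (((i : ℕ) : ℤ) - ((l : ℕ) : ℤ)) % (n : ℤ) - (((j : ℕ) : ℤ) - ((l : ℕ) : ℤ)) % (n : ℤ)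
        = (((i' : ℕ) : ℤ) - ((l : ℕ) : ℤ)) % (n : ℤ)
          - (((j' : ℕ) : ℤ) - ((l : ℕ) : ℤ)) % (n : ℤ) := by
      intro l
      have := congrFun h l
      simp only [Pi.sub_apply, toeplitzRow] at this
      linarith
    -- l = 0
    have h0 := hl ⟨0, lt_of_lt_of_le hn hnm⟩
    simp only [Int.natCast_zero, sub_zero] at h0
    rw [Int.emod_eq_of_lt (bnd i).1 (bnd i).2, Int.emod_eq_of_lt (bnd j).1 (bnd j).2,
        Int.emod_eq_of_lt (bnd i').1 (bnd i').2, Int.emod_eq_of_lt (bnd j').1 (bnd j').2] at h0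
    -- l = j
    have hj := hl ⟨(j : ℕ), lt_of_lt_of_le j.isLt hnm⟩
    rw [show (((⟨(j : ℕ), lt_of_lt_of_le j.isLt hnm⟩ : Fin m) : ℕ) : ℤ) = ((j : ℕ) : ℤ) from rfl,
      sub_self, Int.zero_emod] at hj
    -- l = i'
    have hi' := hl ⟨(i' : ℕ), lt_of_lt_of_le i'.isLt hnm⟩
    rw [show (((⟨(i' : ℕ), lt_of_lt_of_le i'.isLt hnm⟩ : Fin m) : ℕ) : ℤ) = ((i' : ℕ) : ℤ) from rfl,
      sub_self, Int.zero_emod] at hi'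
    have m1 := mod_diff hN (bnd i).1 (bnd i).2 (bnd j).1 (bnd j).2
    have m2 := mod_diff hN (bnd i').1 (bnd i').2 (bnd j).1 (bnd j).2
    have m3 := mod_diff hN (bnd j').1 (bnd j').2 (bnd j).1 (bnd j).2
    have m4 := mod_diff hN (bnd i).1 (bnd i).2 (bnd i').1 (bnd i').2
    have m5 := mod_diff hN (bnd j).1 (bnd j).2 (bnd i').1 (bnd i').2
    have m6 := mod_diff hN (bnd j').1 (bnd j').2 (bnd i').1 (bnd i').2
    have hb1 := bnd i; have hb2 := bnd j; have hb3 := bnd i'; have hb4 := bnd j'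
    have hn' : ((n : ℤ)) ≠ 0 := ne_of_gt hN
    have q1 := Int.emod_nonneg (((i : ℕ) : ℤ) - ((j : ℕ) : ℤ)) hn'
    have q2 := Int.emod_nonneg (((i' : ℕ) : ℤ) - ((j : ℕ) : ℤ)) hn'
    have q3 := Int.emod_nonneg (((j' : ℕ) : ℤ) - ((j : ℕ) : ℤ)) hn'
    have q4 := Int.emod_nonneg (((i : ℕ) : ℤ) - ((i' : ℕ) : ℤ)) hn'
    have q5 := Int.emod_nonneg (((j : ℕ) : ℤ) - ((i' : ℕ) : ℤ)) hn'
    have q6 := Int.emod_nonneg (((j' : ℕ) : ℤ) - ((i' : ℕ) : ℤ)) hn'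
    have r1 := Int.emod_lt_of_pos (((i : ℕ) : ℤ) - ((j : ℕ) : ℤ)) hN
    have r2 := Int.emod_lt_of_pos (((i' : ℕ) : ℤ) - ((j : ℕ) : ℤ)) hN
    have r3 := Int.emod_lt_of_pos (((j' : ℕ) : ℤ) - ((j : ℕ) : ℤ)) hN
    have r4 := Int.emod_lt_of_pos (((i : ℕ) : ℤ) - ((i' : ℕ) : ℤ)) hN
    have r5 := Int.emod_lt_of_pos (((j : ℕ) : ℤ) - ((i' : ℕ) : ℤ)) hN
    have r6 := Int.emod_lt_of_pos (((j' : ℕ) : ℤ) - ((i' : ℕ) : ℤ)) hN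
    obtain ⟨hII, hJJ⟩ : ((i : ℕ) : ℤ) = ((i' : ℕ) : ℤ) ∧ ((j : ℕ) : ℤ) = ((j' : ℕ) : ℤ) := by
      rcases m1 with m1 | m1 <;> rcases m2 with m2 | m2 <;> rcases m3 with m3 | m3 <;>
        rcases m4 with m4 | m4 <;> rcases m5 with m5 | m5 <;> rcases m6 with m6 | m6 <;>
        rw [m1] at hj <;> rw [m2] at hj <;> rw [m3] at hj <;>
        rw [m4] at hi' <;> rw [m5] at hi' <;> rw [m6] at hi' <;>
        omega
    exact ⟨Fin.ext (by exact_mod_cast hII), Fin.ext (by exact_mod_cast hJJ)⟩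
  · intro i j hij l heq
    have hIJ : ((i : ℕ) : ℤ) ≠ ((j : ℕ) : ℤ) :=
      fun hc => hij (Fin.ext (by exact_mod_cast hc))
    simp only [toeplitzRow, add_left_inj] at heq
    have hz : (((i : ℕ) : ℤ) - ((j : ℕ) : ℤ)) % (n : ℤ) = 0 := by
      have h1 : (((i : ℕ) : ℤ) - ((j : ℕ) : ℤ)) % (n : ℤ)
          = ((((i : ℕ) : ℤ) - ((l : ℕ) : ℤ)) - (((j : ℕ) : ℤ) - ((l : ℕ) : ℤ))) % (n : ℤ) := by
        ring_nf
      rw [h1, Int.sub_emod, heq, sub_self, Int.zero_emod]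
    have m1 := mod_diff hN (bnd i).1 (bnd i).2 (bnd j).1 (bnd j).2
    have hb1 := bnd i; have hb2 := bnd j
    omega
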